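/- For each integer k, the integral I_k = ∫₀^∞ ∫_{-∞}^0 exp(-[(a+b-2k(b-a))² + (a-b)²]/2) da db equals ∫∫_{R_k} exp(-(x²+y²)) dx dy, where R_k is the cone in ℝ² generated by the vectors (k, k+1) and (k-1, k). Moreover, Σ_{k=-∞}^{∞} I_k = π/2. -/

import Mathlib

open MeasureTheory

noncomputable section

/-- `I_k = ∫₀^∞ ∫_{-∞}^0 exp(-[(a+b-2k(b-a))² + (a-b)²]/2) da db`. -/
def Ik (k : ℤ) : ℝ :=
  ∫ b in Set.Ioi (0 : ℝ), ∫ a in Set.Iio (0 : ℝ),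
    Real.exp (-(((a + b - 2 * (k : ℝ) * (b - a)) ^ 2 + (a - b) ^ 2) / 2))

/-- The cone generated by the vectors `(k, k+1)` and `(k-1, k)`. -/
def cone (k : ℤ) : Set (ℝ × ℝ) :=
  {p | ∃ c d : ℝ, 0 ≤ c ∧ 0 ≤ d ∧
    p = c • ((k : ℝ), (k : ℝ) + 1) + d • ((k : ℝ) - 1, (k : ℝ))}

namespace IkAux

open Set Real

/-- The Gaussian function on the plane. -/
def g (p : ℝ × ℝ) : ℝ := Real.exp (-(p.1 ^ 2 + p.2 ^ 2))

/-- The linear map `(b, a) ↦ (-ka + (k-1)b, -(k+1)a + kb)`. -/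
def Smap (k : ℤ) : (ℝ × ℝ) →ₗ[ℝ] ℝ × ℝ :=
  Matrix.toLin (Module.Basis.finTwoProd ℝ) (Module.Basis.finTwoProd ℝ)
    !![(k : ℝ) - 1, -(k : ℝ); (k : ℝ), -((k : ℝ) + 1)]

lemma Smap_apply (k : ℤ) (p : ℝ × ℝ) :
    Smap k p = (((k:ℝ) - 1) * p.1 + (-(k:ℝ)) * p.2, (k:ℝ) * p.1 + (-((k:ℝ)+1)) * p.2) :=
  Matrix.toLin_finTwoProd_apply _ _ _ _ _

lemma Smap_det (k : ℤ) : LinearMap.det (Smap k) = 1 := by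
  rw [Smap, LinearMap.det_toLin]
  rw [Matrix.det_fin_two_of]
  ring

lemma Smap_inj (k : ℤ) : Function.Injective (Smap k) := by
  have h : ∀ p : ℝ × ℝ,
      ((-((k:ℝ)+1)) * (Smap k p).1 + (k:ℝ) * (Smap k p).2,
       (-(k:ℝ)) * (Smap k p).1 + ((k:ℝ)-1) * (Smap k p).2) = p := by
    intro p
    rw [Smap_apply]
    ext <;> simp <;> ring
  intro p q hpq
  rw [← h p, ← h q, hpq]

lemma cone_eq_image (k : ℤ) : cone k = Smap k '' (Set.Ici (0:ℝ) ×ˢ Set.Iic (0:ℝ)) := by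
  ext p
  constructor
  · rintro ⟨c, d, hc, hd, rfl⟩
    refine ⟨(d, -c), ⟨hd, by simpa using hc⟩, ?_⟩
    rw [Smap_apply]
    ext <;> simp <;> ring
  · rintro ⟨⟨b, a⟩, ⟨hb, ha⟩, rfl⟩
    refine ⟨-a, b, by simpa using ha, hb, ?_⟩
    rw [Smap_apply]
    ext <;> simp <;> ring

lemma mem_cone_iff (k : ℤ) (p : ℝ × ℝ) :
    p ∈ cone k ↔ p.1 ≤ (k:ℝ) * (p.2 - p.1) ∧ (k:ℝ) * (p.2 - p.1) ≤ p.2 := by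
  constructor
  · rintro ⟨c, d, hc, hd, rfl⟩
    constructor <;> simp <;> nlinarith
  · rintro ⟨h1, h2⟩
    refine ⟨p.2 - (k:ℝ) * (p.2 - p.1), (k:ℝ) * (p.2 - p.1) - p.1, by linarith, by linarith, ?_⟩
    ext <;> simp <;> ring

lemma cone_measurable (k : ℤ) : MeasurableSet (cone k) := by
  have : cone k = {p : ℝ × ℝ | p.1 ≤ (k:ℝ) * (p.2 - p.1)} ∩
      {p : ℝ × ℝ | (k:ℝ) * (p.2 - p.1) ≤ p.2} := by
    ext p; rw [mem_cone_iff]; rfl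
  rw [this]
  apply MeasurableSet.inter
  · exact measurableSet_le (by fun_prop) (by fun_prop)
  · exact measurableSet_le (by fun_prop) (by fun_prop)

lemma line_null {α β : ℝ} (q : ℝ × ℝ) (hq : α * q.1 + β * q.2 ≠ 0) :
    volume {p : ℝ × ℝ | α * p.1 + β * p.2 = 0} = 0 := by
  have hset : {p : ℝ × ℝ | α * p.1 + β * p.2 = 0} =
      ↑(LinearMap.ker (α • LinearMap.fst ℝ ℝ ℝ + β • LinearMap.snd ℝ ℝ ℝ)) := by
    ext p
    simp [LinearMap.mem_ker, smul_eq_mul]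
  rw [hset]
  refine Measure.addHaar_submodule _ _ (fun htop => hq ?_)
  have : q ∈ LinearMap.ker (α • LinearMap.fst ℝ ℝ ℝ + β • LinearMap.snd ℝ ℝ ℝ) := by
    rw [htop]; trivial
  simpa [LinearMap.mem_ker, smul_eq_mul] using this

lemma diag_null : volume {p : ℝ × ℝ | p.1 = p.2} = 0 := by
  have := line_null (α := 1) (β := -1) ((1:ℝ), (0:ℝ)) (by norm_num)
  convert this using 2
  ext p
  constructor <;> intro h <;> simp at * <;> linarith

lemma cone_inter_subset {j k : ℤ} (h : j < k) :
    cone j ∩ cone k ⊆ {p : ℝ × ℝ | p.1 = p.2} ∪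
      {p : ℝ × ℝ | (1 + (j:ℝ)) * p.1 + (-(j:ℝ)) * p.2 = 0} := by
  rintro ⟨x, y⟩ ⟨hj, hk⟩
  rw [mem_cone_iff] at hj hk
  obtain ⟨hj1, hj2⟩ := hj
  obtain ⟨hk1, hk2⟩ := hk
  simp only [Set.mem_union, Set.mem_setOf_eq]
  have hxy : x ≤ y := le_trans hk1 hk2
  have hjk : (j:ℝ) + 1 ≤ (k:ℝ) := by exact_mod_cast h
  rcases eq_or_lt_of_le hxy with heq | hlt
  · exact Or.inl heq
  · right
    nlinarith

lemma cone_aedisjoint : Pairwise (Function.onFun (AEDisjoint volume) cone) := by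
  intro j k hjk
  have key : ∀ {a b : ℤ}, a < b → volume (cone a ∩ cone b) = 0 := by
    intro a b hab
    refine measure_mono_null (cone_inter_subset hab) ?_
    refine measure_union_null diag_null ?_
    exact line_null ((1:ℝ), (1:ℝ)) (by push_cast; ring_nf; norm_num)
  rcases lt_or_gt_of_ne hjk with h | h
  · exact key h
  · have := key h
    rwa [Set.inter_comm] at this

lemma union_cone_ae :
    (⋃ k : ℤ, cone k) =ᵐ[volume] {p : ℝ × ℝ | p.1 < p.2} := by
  rw [MeasureTheory.ae_eq_set]
  constructor
  · refine measure_mono_null ?_ diag_null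
    rintro ⟨x, y⟩ ⟨hp, hnp⟩
    simp only [Set.mem_iUnion] at hp
    obtain ⟨k, hk⟩ := hp
    rw [mem_cone_iff] at hk
    have : x ≤ y := le_trans hk.1 hk.2
    simp only [Set.mem_setOf_eq] at hnp ⊢
    exact le_antisymm this (not_lt.mp hnp)
  · convert measure_empty (μ := volume)
    rw [Set.diff_eq_empty]
    rintro ⟨x, y⟩ hp
    simp only [Set.mem_setOf_eq] at hp
    have ht : (0:ℝ) < y - x := by linarith
    refine Set.mem_iUnion.2 ⟨⌈x / (y - x)⌉, ?_⟩
    rw [mem_cone_iff]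
    constructor
    · have := Int.le_ceil (x / (y - x))
      calc x = (x / (y - x)) * (y - x) := by field_simp
        _ ≤ (⌈x / (y - x)⌉ : ℝ) * (y - x) := by
            exact mul_le_mul_of_nonneg_right this (le_of_lt ht)
    · have h2 : (⌈x / (y - x)⌉ : ℝ) < x / (y - x) + 1 := Int.ceil_lt_add_one _
      have : (⌈x / (y - x)⌉ : ℝ) * (y - x) < (x / (y - x) + 1) * (y - x) :=
        mul_lt_mul_of_pos_right h2 ht
      have heq : (x / (y - x) + 1) * (y - x) = y := by field_simp; ring
      simp only []
      linarith

lemma g_eq (p : ℝ × ℝ) : g p = Real.exp (-(1:ℝ) * p.1 ^ 2) * Real.exp (-(1:ℝ) * p.2 ^ 2) := by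
  rw [g, ← Real.exp_add]; ring_nf

lemma g_integrable : Integrable g (volume : Measure (ℝ × ℝ)) := by
  have h1 : Integrable (fun x : ℝ => Real.exp (-(1:ℝ) * x ^ 2)) volume :=
    integrable_exp_neg_mul_sq one_pos
  have := h1.mul_prod h1
  rw [← Measure.volume_eq_prod] at this
  exact this.congr (by filter_upwards with p using (g_eq p).symm)

lemma g_total : ∫ p : ℝ × ℝ, g p = π := by
  simp_rw [g_eq, Measure.volume_eq_prod]
  rw [integral_prod_mul (f := fun x : ℝ => Real.exp (-(1:ℝ) * x ^ 2))
    (g := fun x : ℝ => Real.exp (-(1:ℝ) * x ^ 2)), integral_gaussian]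
  rw [div_one, Real.mul_self_sqrt Real.pi_nonneg]

lemma g_half : ∫ p in {p : ℝ × ℝ | p.1 < p.2}, g p = π / 2 := by
  set H : Set (ℝ × ℝ) := {p : ℝ × ℝ | p.1 < p.2} with hH
  have hHm : MeasurableSet H := measurableSet_lt (by fun_prop) (by fun_prop)
  have hsplit : (∫ p in H, g p) + (∫ p in Hᶜ, g p) = π := by
    rw [integral_add_compl hHm g_integrable, g_total]
  have hswap : MeasurePreserving (Prod.swap : ℝ × ℝ → ℝ × ℝ) volume volume := by
    rw [Measure.volume_eq_prod]; exact Measure.measurePreserving_swap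
  have hemb : MeasurableEmbedding (Prod.swap : ℝ × ℝ → ℝ × ℝ) :=
    MeasurableEquiv.prodComm.measurableEmbedding
  have hcompl : (∫ p in Hᶜ, g p) = ∫ p in H, g p := by
    have hcongr : (Hᶜ : Set (ℝ × ℝ)) =ᵐ[volume] (Prod.swap ⁻¹' H : Set (ℝ × ℝ)) := by
      rw [MeasureTheory.ae_eq_set]
      constructor
      · refine measure_mono_null ?_ diag_null
        rintro ⟨x, y⟩ ⟨h1, h2⟩
        have h1' : ¬ x < y := h1
        have h2' : ¬ y < x := h2
        exact le_antisymm (not_lt.mp h2') (not_lt.mp h1')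
      · convert measure_empty (μ := volume)
        rw [Set.diff_eq_empty]
        rintro ⟨x, y⟩ h1
        simp only [Set.mem_preimage, Prod.swap_prod_mk, hH, Set.mem_setOf_eq] at h1
        exact not_lt.2 h1.le
    rw [setIntegral_congr_set hcongr]
    have := hswap.setIntegral_preimage_emb hemb g H
    rw [← this]
    apply setIntegral_congr_fun (measurableSet_preimage measurable_swap hHm)
    intro p _
    simp [g, add_comm]
  rw [hcompl] at hsplit
  linarith

lemma closed_open_ae :
    (Set.Ici (0:ℝ) ×ˢ Set.Iic (0:ℝ)) =ᵐ[volume] (Set.Ioi (0:ℝ) ×ˢ Set.Iio (0:ℝ)) := by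
  rw [MeasureTheory.ae_eq_set]
  constructor
  · have hsub : (Set.Ici (0:ℝ) ×ˢ Set.Iic (0:ℝ)) \ (Set.Ioi (0:ℝ) ×ˢ Set.Iio (0:ℝ)) ⊆
        {p : ℝ × ℝ | (1:ℝ) * p.1 + (0:ℝ) * p.2 = 0} ∪
        {p : ℝ × ℝ | (0:ℝ) * p.1 + (1:ℝ) * p.2 = 0} := by
      rintro ⟨b, a⟩ ⟨⟨hb, ha⟩, hn⟩
      simp only [Set.mem_prod, Set.mem_Ioi, Set.mem_Iio, not_and_or, not_lt] at hn
      simp only [Set.mem_union, Set.mem_setOf_eq, one_mul, zero_mul, add_zero, zero_add]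
      rcases hn with h | h
      · exact Or.inl (le_antisymm h hb)
      · exact Or.inr (le_antisymm ha h)
    refine measure_mono_null hsub (measure_union_null ?_ ?_)
    · exact line_null ((1:ℝ), (0:ℝ)) (by norm_num)
    · exact line_null ((0:ℝ), (1:ℝ)) (by norm_num)
  · convert measure_empty (μ := volume)
    rw [Set.diff_eq_empty]
    exact Set.prod_mono Set.Ioi_subset_Ici_self Set.Iio_subset_Iic_self

lemma Ik_eq (k : ℤ) : Ik k = ∫ p in cone k, g p := by
  have hs : MeasurableSet (Set.Ici (0:ℝ) ×ˢ Set.Iic (0:ℝ)) :=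
    measurableSet_Ici.prod measurableSet_Iic
  set S' : (ℝ × ℝ) →L[ℝ] ℝ × ℝ := LinearMap.toContinuousLinearMap (Smap k) with hS'
  have hderiv : ∀ p ∈ (Set.Ici (0:ℝ) ×ˢ Set.Iic (0:ℝ)),
      HasFDerivWithinAt (Smap k) S' (Set.Ici (0:ℝ) ×ˢ Set.Iic (0:ℝ)) p :=
    fun p _ => S'.hasFDerivAt.hasFDerivWithinAt
  have hinj : Set.InjOn (Smap k) (Set.Ici (0:ℝ) ×ˢ Set.Iic (0:ℝ)) := (Smap_inj k).injOn
  have hdet : |S'.det| = 1 := by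
    have : S'.det = LinearMap.det (Smap k) := rfl
    rw [this, Smap_det]; norm_num
  have hcov := integral_image_eq_integral_abs_det_fderiv_smul volume hs hderiv hinj g
  rw [← cone_eq_image] at hcov
  simp only [hdet, one_smul] at hcov
  rw [hcov]
  have hint : IntegrableOn (fun p => g (Smap k p)) (Set.Ici (0:ℝ) ×ˢ Set.Iic (0:ℝ)) volume := by
    have := (integrableOn_image_iff_integrableOn_abs_det_fderiv_smul volume hs hderiv hinj g).1
      (g_integrable.integrableOn)
    simpa only [hdet, one_smul] using this
  rw [setIntegral_congr_set closed_open_ae]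
  have hint2 : IntegrableOn (fun p => g (Smap k p)) (Set.Ioi (0:ℝ) ×ˢ Set.Iio (0:ℝ)) volume :=
    hint.mono_set (Set.prod_mono Set.Ioi_subset_Ici_self Set.Iio_subset_Iic_self)
  rw [Measure.volume_eq_prod] at hint2 ⊢
  rw [setIntegral_prod _ hint2]
  unfold Ik
  refine setIntegral_congr_fun measurableSet_Ioi (fun b _ => ?_)
  refine setIntegral_congr_fun measurableSet_Iio (fun a _ => ?_)
  rw [Smap_apply]
  unfold g
  simp only []
  congr 1
  ring

end IkAux

/-- `I_k` equals the Gaussian integral over the cone `R_k`, and `Σ_k I_k = π/2`. -/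
theorem Ik_eq_cone_integral_and_sum :
    (∀ k : ℤ, Ik k = ∫ p in cone k, Real.exp (-(p.1 ^ 2 + p.2 ^ 2))) ∧
    ∑' k : ℤ, Ik k = Real.pi / 2 := by
  constructor
  · exact IkAux.Ik_eq
  · have h1 : ∀ k : ℤ, Ik k = ∫ p in cone k, IkAux.g p := IkAux.Ik_eq
    calc ∑' k : ℤ, Ik k = ∑' k : ℤ, ∫ p in cone k, IkAux.g p := by simp_rw [h1]
      _ = ∫ p in ⋃ k : ℤ, cone k, IkAux.g p :=
          (integral_iUnion_ae (fun k => (IkAux.cone_measurable k).nullMeasurableSet)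
            IkAux.cone_aedisjoint (IkAux.g_integrable.integrableOn)).symm
      _ = ∫ p in {p : ℝ × ℝ | p.1 < p.2}, IkAux.g p := setIntegral_congr_set IkAux.union_cone_ae
      _ = Real.pi / 2 := IkAux.g_half

end
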